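/- Let G be a group and let L be a subgroup of G such that L is infinite, L is simple as a group, and the normal closure of L in G equals G. Then every finite-index subgroup of G equals G itself (equivalently, G has no proper subgroups of finite index). -/

import Mathlib

/-- If a group `G` has an infinite simple subgroup `L` whose normal closure is all
of `G`, then `G` has no proper finite-index subgroups. -/
theorem finiteIndex_eq_top_of_normalClosure_simple_subgroup
    {G : Type*} [Group G] (L : Subgroup G)
    (hinf : Infinite L) (hsimple : IsSimpleGroup L)
    (hnc : Subgroup.normalClosure (L : Set G) = ⊤) :
    ∀ H : Subgroup G, H.FiniteIndex → H = ⊤ := by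
  intro H hH
  set N := H.normalCore with hN
  haveI : H.FiniteIndex := hH
  haveI : N.FiniteIndex := Subgroup.finiteIndex_normalCore H
  have hNnorm : N.Normal := H.normalCore_normal
  -- K := N ∩ L viewed inside L
  set K := N.subgroupOf L with hK
  haveI : K.Normal := hNnorm.subgroupOf L
  haveI : K.FiniteIndex := Subgroup.instFiniteIndex_subgroupOf N L
  have hKtop : K = ⊤ := by
    rcases hsimple.eq_bot_or_eq_top_of_normal K ‹K.Normal› with hb | ht
    · exfalso
      have hfin : K.index ≠ 0 := ‹K.FiniteIndex›.index_ne_zero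
      rw [hb, Subgroup.index_bot, Nat.card_eq_zero_of_infinite] at hfin
      exact hfin rfl
    · exact ht
  have hLN : L ≤ N := by
    intro x hx
    have : (⟨x, hx⟩ : L) ∈ K := hKtop ▸ Subgroup.mem_top _
    exact this
  have hNtop : N = ⊤ := by
    rw [eq_top_iff, ← hnc]
    exact Subgroup.normalClosure_le_normal hLN
  exact le_antisymm le_top (hNtop ▸ H.normalCore_le)
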